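/- arXiv:math/0207184 — 2 statements merged into one kernel-verified Lean document; each statement's English description precedes it below -/
import Mathlib

section
/- For every λ1 ∈ Λ1, distinct elements of L1(λ1) lie in distinct cosets of Λs (i.e. if λ2, λ2' ∈ L1(λ1) and λ2' − λ2 ∈ Λs then λ2' = λ2), and |L1(λ1)| = N1 = [Λ2 : Λs]. Similarly, for every λ2 ∈ Λ2, distinct elements of L2(λ2) lie in distinct cosets of Λs and |L2(λ2)| = N2 = [Λ1 : Λs]. -/
/-- `Λ` is a (full-rank) lattice in `ℝ^L`: the `ℤ`-span of an `ℝ`-basis. -/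
def IsLattice {L : ℕ} (Λ : AddSubgroup (EuclideanSpace ℝ (Fin L))) : Prop :=
  ∃ b : Module.Basis (Fin L) ℝ (EuclideanSpace ℝ (Fin L)),
    Λ = AddSubgroup.closure (Set.range ⇑b)

/-- `Λ'` is clean in `Λ`: every point of `Λ` has a unique nearest point of `Λ'`
in the Euclidean norm. -/
def IsClean {L : ℕ} (Λ Λ' : AddSubgroup (EuclideanSpace ℝ (Fin L))) : Prop :=
  ∀ x ∈ Λ, ∃! p, p ∈ Λ' ∧ ∀ q ∈ Λ', ‖x - p‖ ≤ ‖x - q‖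

/-- The discrete Voronoi set `V0 = {λ ∈ Λ : ‖λ‖ < ‖λ - s‖ for all nonzero s ∈ Λs}`. -/
def voronoiSet {L : ℕ} (Λ Λs : AddSubgroup (EuclideanSpace ℝ (Fin L))) :
    Set (EuclideanSpace ℝ (Fin L)) :=
  {x | x ∈ Λ ∧ ∀ s ∈ Λs, s ≠ 0 → ‖x‖ < ‖x - s‖}

/-- `L1(λ1) = Λ2 ∩ (λ1 + V0)`. -/
def L1Set {L : ℕ} (Λ Λ2 Λs : AddSubgroup (EuclideanSpace ℝ (Fin L)))
    (lam1 : EuclideanSpace ℝ (Fin L)) : Set (EuclideanSpace ℝ (Fin L)) :=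
  {x | x ∈ Λ2 ∧ x - lam1 ∈ voronoiSet Λ Λs}

/-- `L2(λ2) = Λ1 ∩ (λ2 + V0)`. -/
def L2Set {L : ℕ} (Λ Λ1 Λs : AddSubgroup (EuclideanSpace ℝ (Fin L)))
    (lam2 : EuclideanSpace ℝ (Fin L)) : Set (EuclideanSpace ℝ (Fin L)) :=
  {x | x ∈ Λ1 ∧ x - lam2 ∈ voronoiSet Λ Λs}

lemma decomp {L : ℕ} (Λ Λs : AddSubgroup (EuclideanSpace ℝ (Fin L)))
    (hs : Λs ≤ Λ) (hclean : IsClean Λ Λs) :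
    ∀ x ∈ Λ, ∃! s, s ∈ Λs ∧ x - s ∈ voronoiSet Λ Λs := by
  intro x hx
  obtain ⟨p, ⟨hpΛs, hpnear⟩, hpuniq⟩ := hclean x hx
  refine ⟨p, ⟨hpΛs, ?_⟩, ?_⟩
  · refine ⟨Λ.sub_mem hx (hs hpΛs), ?_⟩
    intro s hsΛs hs0
    have hle : ‖x - p‖ ≤ ‖x - p - s‖ := by
      have := hpnear (p + s) (Λs.add_mem hpΛs hsΛs)
      simpa [sub_add_eq_sub_sub] using this
    rcases lt_or_eq_of_le hle with h | h
    · exact h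
    · exfalso
      apply hs0
      have heq : p + s = p := hpuniq (p + s) ⟨Λs.add_mem hpΛs hsΛs, fun q hq => by
        rw [sub_add_eq_sub_sub, ← h]; exact hpnear q hq⟩
      have := add_eq_left.mp heq
      exact this
  · rintro s' ⟨hs'Λs, _, hv⟩
    apply hpuniq
    refine ⟨hs'Λs, fun q hq => ?_⟩
    by_cases hqs : q = s'
    · simp [hqs]
    · have := hv (q - s') (Λs.sub_mem hq hs'Λs) (sub_ne_zero.mpr hqs)
      calc ‖x - s'‖ ≤ ‖x - s' - (q - s')‖ := le_of_lt this
        _ = ‖x - q‖ := by congr 1; abel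

lemma mainAux {L : ℕ} (Λ M Λs : AddSubgroup (EuclideanSpace ℝ (Fin L)))
    (hM : M ≤ Λ) (hsM : Λs ≤ M) (hclean : IsClean Λ Λs)
    (lam : EuclideanSpace ℝ (Fin L)) (hlam : lam ∈ Λ) :
    (∀ x ∈ {x | x ∈ M ∧ x - lam ∈ voronoiSet Λ Λs},
      ∀ y ∈ {x | x ∈ M ∧ x - lam ∈ voronoiSet Λ Λs}, y - x ∈ Λs → y = x) ∧
      ({x | x ∈ M ∧ x - lam ∈ voronoiSet Λ Λs} : Set _).ncard
        = (Λs.addSubgroupOf M).index := by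
  have hsΛ : Λs ≤ Λ := hsM.trans hM
  have hinj : ∀ x ∈ {x | x ∈ M ∧ x - lam ∈ voronoiSet Λ Λs},
      ∀ y ∈ {x | x ∈ M ∧ x - lam ∈ voronoiSet Λ Λs}, y - x ∈ Λs → y = x := by
    rintro x ⟨hxM, hxV⟩ y ⟨hyM, hyV⟩ hd
    have hyΛ : y - lam ∈ Λ := Λ.sub_mem (hM hyM) hlam
    have h1 : (0 : EuclideanSpace ℝ (Fin L)) ∈ Λs ∧ (y - lam) - 0 ∈ voronoiSet Λ Λs := by
      exact ⟨Λs.zero_mem, by rw [sub_zero]; exact hyV⟩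
    have h2 : y - x ∈ Λs ∧ (y - lam) - (y - x) ∈ voronoiSet Λ Λs := by
      constructor
      · exact hd
      · have : (y - lam) - (y - x) = x - lam := by abel
        rw [this]; exact hxV
    have := (decomp Λ Λs hsΛ hclean (y - lam) hyΛ).unique h2 h1
    exact sub_eq_zero.mp this
  refine ⟨hinj, ?_⟩
  set S := {x | x ∈ M ∧ x - lam ∈ voronoiSet Λ Λs} with hSdef
  let f : ↥S → M ⧸ Λs.addSubgroupOf M := fun x => QuotientAddGroup.mk ⟨x.1, x.2.1⟩
  have hbij : Function.Bijective f := by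
    constructor
    · rintro ⟨x, hx⟩ ⟨y, hy⟩ hxy
      have : (-(⟨x, hx.1⟩ : M) + ⟨y, hy.1⟩) ∈ Λs.addSubgroupOf M :=
        QuotientAddGroup.eq.mp hxy
      have hmem : y - x ∈ Λs := by
        have := this
        rw [AddSubgroup.mem_addSubgroupOf] at this
        simpa [neg_add_eq_sub] using this
      exact Subtype.ext (hinj x hx y hy hmem).symm
    · intro q
      induction q using QuotientAddGroup.induction_on with
      | H z =>
        obtain ⟨s, ⟨hsΛs, hV⟩, _⟩ := decomp Λ Λs hsΛ hclean ((z : EuclideanSpace ℝ (Fin L)) - lam)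
          (Λ.sub_mem (hM z.2) hlam)
        have hxM : (z : EuclideanSpace ℝ (Fin L)) - s ∈ M := M.sub_mem z.2 (hsM hsΛs)
        have hxS : (z : EuclideanSpace ℝ (Fin L)) - s ∈ S := by
          refine ⟨hxM, ?_⟩
          have h : (z : EuclideanSpace ℝ (Fin L)) - s - lam = (z : EuclideanSpace ℝ (Fin L)) - lam - s := by abel
          rw [h]; exact hV
        refine ⟨⟨_, hxS⟩, ?_⟩
        show QuotientAddGroup.mk _ = QuotientAddGroup.mk z
        rw [QuotientAddGroup.eq]
        rw [AddSubgroup.mem_addSubgroupOf]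
        show -((z : EuclideanSpace ℝ (Fin L)) - s) + z ∈ Λs
        have h : -((z : EuclideanSpace ℝ (Fin L)) - s) + z = s := by abel
        rw [h]; exact hsΛs
  calc S.ncard = Nat.card ↥S := (Nat.card_coe_set_eq S).symm
    _ = Nat.card (M ⧸ Λs.addSubgroupOf M) := Nat.card_eq_of_bijective f hbij
    _ = (Λs.addSubgroupOf M).index := rfl


theorem stmt2 {L : ℕ} (Λ Λ1 Λ2 Λs : AddSubgroup (EuclideanSpace ℝ (Fin L)))
    (hΛ : IsLattice Λ) (h1 : Λ1 ≤ Λ) (h2 : Λ2 ≤ Λ)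
    (hs1 : Λs ≤ Λ1) (hs2 : Λs ≤ Λ2)
    (hclean : IsClean Λ Λs)
    (N1 N2 : ℕ) (hN1pos : 0 < N1) (hN2pos : 0 < N2)
    (hidx1 : (Λs.addSubgroupOf Λ2).index = N1)
    (hidx2 : (Λs.addSubgroupOf Λ1).index = N2)
    (hidxs : (Λs.addSubgroupOf Λ).index = N1 * N2) :
    (∀ lam1 ∈ Λ1,
      (∀ x ∈ L1Set Λ Λ2 Λs lam1, ∀ y ∈ L1Set Λ Λ2 Λs lam1, y - x ∈ Λs → y = x) ∧
        (L1Set Λ Λ2 Λs lam1).ncard = N1) ∧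
    (∀ lam2 ∈ Λ2,
      (∀ x ∈ L2Set Λ Λ1 Λs lam2, ∀ y ∈ L2Set Λ Λ1 Λs lam2, y - x ∈ Λs → y = x) ∧
        (L2Set Λ Λ1 Λs lam2).ncard = N2) := by
  constructor
  · intro lam1 hlam1
    have h := mainAux Λ Λ2 Λs h2 hs2 hclean lam1 (h1 hlam1)
    exact ⟨h.1, h.2.trans hidx1⟩
  · intro lam2 hlam2
    have h := mainAux Λ Λ1 Λs h1 hs1 hclean lam2 (h2 hlam2)
    exact ⟨h.1, h.2.trans hidx2⟩
end

section
/- Let P1 = Λ1 ∩ V0 and E0 = {(λ1, λ2) : λ1 ∈ P1, λ2 ∈ L1(λ1)}. Then |E0| = N1·N2, and distinct elements of E0 lie in distinct cosets under the diagonal Λs-action (i.e. if (λ1, λ2), (λ1 + s, λ2 + s) ∈ E0 with s ∈ Λs, then s = 0). Hence the number of cosets of edges modulo Λs represented by E0 equals N1·N2 = |V0|, the number of lattice points in the discrete Voronoi set V0. -/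
theorem stmt5 {L : ℕ} (Λ Λ1 Λ2 Λs : AddSubgroup (EuclideanSpace ℝ (Fin L)))
    (hΛ : IsLattice Λ) (h1 : Λ1 ≤ Λ) (h2 : Λ2 ≤ Λ)
    (hs1 : Λs ≤ Λ1) (hs2 : Λs ≤ Λ2)
    (hclean : IsClean Λ Λs)
    (N1 N2 : ℕ) (hN1pos : 0 < N1) (hN2pos : 0 < N2)
    (hidx1 : (Λs.addSubgroupOf Λ2).index = N1)
    (hidx2 : (Λs.addSubgroupOf Λ1).index = N2)
    (hidxs : (Λs.addSubgroupOf Λ).index = N1 * N2)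
    -- `P1 = Λ1 ∩ V0` and the edge set `E0 = {(λ1, λ2) : λ1 ∈ P1, λ2 ∈ L1(λ1)}`
    (E0 : Set (EuclideanSpace ℝ (Fin L) × EuclideanSpace ℝ (Fin L)))
    (hE0 : E0 = {p | (p.1 ∈ Λ1 ∧ p.1 ∈ voronoiSet Λ Λs) ∧ p.2 ∈ L1Set Λ Λ2 Λs p.1}) :
    E0.ncard = N1 * N2 ∧
      (∀ p ∈ E0, ∀ s ∈ Λs, (p.1 + s, p.2 + s) ∈ E0 → s = 0) ∧
      (voronoiSet Λ Λs).ncard = N1 * N2 := by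
  subst hE0
  have hsL : Λs ≤ Λ := hs1.trans h1
  -- each coset of Λs contains at most one point of V0
  have key1 : ∀ v ∈ voronoiSet Λ Λs, ∀ v' ∈ voronoiSet Λ Λs, v - v' ∈ Λs → v = v' := by
    intro v hv v' hv' hmem
    by_contra hne
    have h0 : v - v' ≠ 0 := sub_ne_zero.mpr hne
    have ha := hv.2 (v - v') hmem h0
    have hb := hv'.2 (-(v - v')) (neg_mem hmem) (neg_ne_zero.mpr h0)
    have e1 : v - (v - v') = v' := by abel
    have e2 : v' - -(v - v') = v := by abel
    rw [e1] at ha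
    rw [e2] at hb
    linarith
  -- each coset of Λs contains at least one point of V0
  have key2 : ∀ x ∈ Λ, ∃ v, v ∈ voronoiSet Λ Λs ∧ x - v ∈ Λs := by
    intro x hx
    obtain ⟨p, ⟨hpmem, hpmin⟩, huniq⟩ := hclean x hx
    refine ⟨x - p, ⟨Λ.sub_mem hx (hsL hpmem), ?_⟩, by simpa using hpmem⟩
    intro s hs hs0
    have hle := hpmin (p + s) (add_mem hpmem hs)
    have heq : x - (p + s) = x - p - s := by abel
    rw [heq] at hle
    rcases lt_or_eq_of_le hle with h | h
    · exact h
    · exfalso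
      apply hs0
      have hq : p + s = p := huniq (p + s) ⟨add_mem hpmem hs, fun q hq => by
        rw [heq, ← h]; exact hpmin q hq⟩
      simpa using hq
  have hV0 : (voronoiSet Λ Λs).ncard = N1 * N2 := by
    rw [← hidxs, AddSubgroup.index, ← Nat.card_coe_set_eq]
    refine Nat.card_congr (Equiv.ofBijective
      (fun v => (QuotientAddGroup.mk ⟨v.1, v.2.1⟩ : Λ ⧸ Λs.addSubgroupOf Λ)) ⟨?_, ?_⟩)
    · rintro ⟨a, ha⟩ ⟨b, hb⟩ hab
      have hm := (QuotientAddGroup.eq (s := Λs.addSubgroupOf Λ)).mp hab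
      rw [AddSubgroup.mem_addSubgroupOf] at hm
      have hd : b - a ∈ Λs := by simpa [neg_add_eq_sub] using hm
      exact Subtype.ext (key1 b hb a ha hd).symm
    · intro q
      refine QuotientAddGroup.induction_on q ?_
      rintro ⟨x, hx⟩
      obtain ⟨v, hv, hxv⟩ := key2 x hx
      refine ⟨⟨v, hv⟩, (QuotientAddGroup.eq (s := Λs.addSubgroupOf Λ)).mpr ?_⟩
      rw [AddSubgroup.mem_addSubgroupOf]
      simpa [neg_add_eq_sub] using hxv
  have hE0card : ({p : EuclideanSpace ℝ (Fin L) × EuclideanSpace ℝ (Fin L) |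
      (p.1 ∈ Λ1 ∧ p.1 ∈ voronoiSet Λ Λs) ∧ p.2 ∈ L1Set Λ Λ2 Λs p.1}).ncard = N1 * N2 := by
    rw [← hidx1, ← hidx2, AddSubgroup.index, AddSubgroup.index, ← Nat.card_coe_set_eq,
      ← Nat.card_prod]
    refine Nat.card_congr (Equiv.ofBijective
      (fun p => ((QuotientAddGroup.mk ⟨p.1.2, p.2.2.1⟩ : Λ2 ⧸ Λs.addSubgroupOf Λ2),
                 (QuotientAddGroup.mk ⟨p.1.1, p.2.1.1⟩ : Λ1 ⧸ Λs.addSubgroupOf Λ1))) ⟨?_, ?_⟩)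
    · rintro ⟨⟨a1, a2⟩, ⟨ha1, ha1V⟩, ha2, ha2V⟩ ⟨⟨b1, b2⟩, ⟨hb1, hb1V⟩, hb2, hb2V⟩ hab
      have h2' := (QuotientAddGroup.eq (s := Λs.addSubgroupOf Λ2)).mp (congrArg Prod.fst hab)
      have h1' := (QuotientAddGroup.eq (s := Λs.addSubgroupOf Λ1)).mp (congrArg Prod.snd hab)
      rw [AddSubgroup.mem_addSubgroupOf] at h2' h1'
      have hd1 : b1 - a1 ∈ Λs := by simpa [neg_add_eq_sub] using h1'
      have hd2 : b2 - a2 ∈ Λs := by simpa [neg_add_eq_sub] using h2'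
      have he1 : b1 = a1 := key1 b1 hb1V a1 ha1V hd1
      subst he1
      have hd : (b2 - b1) - (a2 - b1) ∈ Λs := by
        have h : (b2 - b1) - (a2 - b1) = b2 - a2 := by abel
        rw [h]; exact hd2
      have he2 : b2 - b1 = a2 - b1 := key1 _ hb2V _ ha2V hd
      have he2' : a2 = b2 := (sub_left_inj.mp he2).symm
      exact Subtype.ext (Prod.ext rfl he2')
    · rintro ⟨q2, q1⟩
      refine QuotientAddGroup.induction_on q2 ?_
      intro y2
      refine QuotientAddGroup.induction_on q1 ?_
      intro y1
      obtain ⟨l1, hl1V, hy1l1⟩ := key2 (y1 : EuclideanSpace ℝ (Fin L)) (h1 y1.2)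
      have hl1e : l1 = (y1 : EuclideanSpace ℝ (Fin L)) - ((y1 : EuclideanSpace ℝ (Fin L)) - l1) := by abel
      have hl1_1 : l1 ∈ Λ1 := by rw [hl1e]; exact sub_mem y1.2 (hs1 hy1l1)
      obtain ⟨v, hvV, hsv⟩ := key2 ((y2 : EuclideanSpace ℝ (Fin L)) - l1)
        (Λ.sub_mem (h2 y2.2) hl1V.1)
      have hl2e : v + l1 = (y2 : EuclideanSpace ℝ (Fin L)) - ((y2 : EuclideanSpace ℝ (Fin L)) - l1 - v) := by abel
      have hl2_2 : v + l1 ∈ Λ2 := by rw [hl2e]; exact sub_mem y2.2 (hs2 hsv)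
      have hvm : v + l1 - l1 ∈ voronoiSet Λ Λs := by simpa using hvV
      refine ⟨⟨(l1, v + l1), ⟨hl1_1, hl1V⟩, hl2_2, hvm⟩, ?_⟩
      refine Prod.ext ?_ ?_
      · refine (QuotientAddGroup.eq (s := Λs.addSubgroupOf Λ2)).mpr ?_
        rw [AddSubgroup.mem_addSubgroupOf]
        have hco : ((-(⟨v + l1, hl2_2⟩ : Λ2) + y2 : Λ2) : EuclideanSpace ℝ (Fin L)) =
            (y2 : EuclideanSpace ℝ (Fin L)) - l1 - v := by
          push_cast
          abel
        rw [hco]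
        exact hsv
      · refine (QuotientAddGroup.eq (s := Λs.addSubgroupOf Λ1)).mpr ?_
        rw [AddSubgroup.mem_addSubgroupOf]
        simpa [neg_add_eq_sub] using hy1l1
  refine ⟨hE0card, ?_, hV0⟩
  rintro ⟨p1, p2⟩ hp s hs hps
  have hkey := key1 (p1 + s) hps.1.2 p1 hp.1.2 (by simpa using hs)
  simpa using hkey
end
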